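/- Let K ∈ ℝ^{n×n} be symmetric positive definite, let w_1,…,w_N ∈ {1,…,n} be N distinct indices, let y_1,…,y_N ∈ ℝ and γ > 0. Let K_W ∈ ℝ^{N×N} be the submatrix (K_W)_{ij} = K_{w_i w_j}, let c ∈ ℝᴺ be the unique solution of (K_W + γN·I_N) c = (y_1,…,y_N)ᵀ, and define x* ∈ ℝⁿ by x*_v = Σ_{i=1}^N c_i K_{v, w_i}. Then x* is the unique minimizer over x ∈ ℝⁿ of the regularized least squares functional F(x) = (1/N) Σ_{i=1}^N (x_{w_i} − y_i)² + γ · xᵀK⁻¹x. -/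

import Mathlib

open Matrix

/-- The representer theorem / RLS solution: with a symmetric positive definite kernel `K`,
distinct labeled nodes `w i` with labels `y i`, and regularization `γ > 0`, the function
`x* v = ∑ i, c i * K v (w i)` with coefficients solving `(K_W + γ N I) c = y` is the unique
minimizer of the regularized least squares functional
`F(x) = (1/N) ∑ i (x (w i) - y i)² + γ xᵀ K⁻¹ x`. -/
theorem stmt_8 {n N : ℕ} (hN : 0 < N)
    (K : Matrix (Fin n) (Fin n) ℝ) (hK : K.PosDef)
    (w : Fin N → Fin n) (hw : Function.Injective w)
    (y : Fin N → ℝ) (γ : ℝ) (hγ : 0 < γ)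
    (c : Fin N → ℝ)
    (hc : (Matrix.of (fun i j => K (w i) (w j)) +
        (γ * (N : ℝ)) • (1 : Matrix (Fin N) (Fin N) ℝ)) *ᵥ c = y) :
    ∀ x : Fin n → ℝ, x ≠ (fun v => ∑ j : Fin N, c j * K v (w j)) →
      (1 / (N : ℝ)) * (∑ i : Fin N, ((∑ j : Fin N, c j * K (w i) (w j)) - y i) ^ 2) +
          γ * ((fun v => ∑ j : Fin N, c j * K v (w j)) ⬝ᵥ
            (K⁻¹ *ᵥ fun v => ∑ j : Fin N, c j * K v (w j))) <
        (1 / (N : ℝ)) * (∑ i : Fin N, (x (w i) - y i) ^ 2) + γ * (x ⬝ᵥ (K⁻¹ *ᵥ x)) := by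
  intro x hx
  have hN' : (N : ℝ) ≠ 0 := Nat.cast_ne_zero.mpr hN.ne'
  set xs : Fin n → ℝ := fun v => ∑ j : Fin N, c j * K v (w j) with hxs
  set d : Fin n → ℝ := fun v => x v - xs v with hdd
  have hdne : d ≠ 0 := by
    intro h
    apply hx
    funext v
    have := congrFun h v
    simpa [hdd, sub_eq_zero] using this
  have hxd : x = xs + d := by funext v; simp [hdd]
  -- the coefficient vector in ℝ^n
  set a : Fin n → ℝ := fun v => ∑ j : Fin N, if v = w j then c j else 0 with ha
  have hKa : K *ᵥ a = xs := by
    funext v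
    simp only [Matrix.mulVec, dotProduct, ha, Finset.mul_sum, mul_ite, mul_zero]
    rw [Finset.sum_comm]
    refine Finset.sum_congr rfl fun j _ => ?_
    rw [Finset.sum_ite_eq' Finset.univ (w j) (fun u => K v u * c j)]
    simp [mul_comm]
  have hdet : IsUnit K.det := (hK.det_pos.ne').isUnit
  have hGxs : K⁻¹ *ᵥ xs = a := by
    rw [← hKa, Matrix.mulVec_mulVec, Matrix.nonsing_inv_mul K hdet, Matrix.one_mulVec]
  -- residual identity from the linear system
  have hres : ∀ i : Fin N, (∑ j : Fin N, c j * K (w i) (w j)) - y i = -(γ * N * c i) := by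
    intro i
    have := congrFun hc i
    simp only [Matrix.mulVec, dotProduct, Matrix.add_apply, Matrix.smul_apply,
      Matrix.one_apply, Matrix.of_apply, smul_eq_mul, mul_ite, mul_one, mul_zero,
      add_mul, ite_mul, zero_mul] at this
    rw [Finset.sum_add_distrib, Finset.sum_ite_eq Finset.univ i (fun j => γ * N * c j)] at this
    simp only [Finset.mem_univ, if_true] at this
    have h2 : ∑ j : Fin N, c j * K (w i) (w j) = ∑ j : Fin N, K (w i) (w j) * c j :=
      Finset.sum_congr rfl fun j _ => mul_comm _ _
    linarith [this]
  -- d ⬝ᵥ a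
  have hda : d ⬝ᵥ a = ∑ i : Fin N, c i * d (w i) := by
    simp only [dotProduct, ha, Finset.mul_sum, mul_ite, mul_zero]
    rw [Finset.sum_comm]
    refine Finset.sum_congr rfl fun j _ => ?_
    rw [Finset.sum_ite_eq' Finset.univ (w j) (fun u => d u * c j)]
    simp [mul_comm]
  -- symmetry of K⁻¹
  have hsymK : K⁻¹ᵀ = K⁻¹ := by
    have hKs : Kᵀ = K := by simpa using hK.isHermitian.eq
    rw [Matrix.transpose_nonsing_inv, hKs]
  have hsym : ∀ u v : Fin n → ℝ, u ⬝ᵥ (K⁻¹ *ᵥ v) = v ⬝ᵥ (K⁻¹ *ᵥ u) := by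
    intro u v
    rw [Matrix.dotProduct_mulVec, ← Matrix.mulVec_transpose, hsymK, dotProduct_comm]
  -- abbreviations
  set S : ℝ := ∑ i : Fin N, c i * d (w i) with hS
  set T : ℝ := ∑ i : Fin N, d (w i) ^ 2 with hT
  set A : ℝ := ∑ i : Fin N, (-(γ * N * c i)) ^ 2 with hA
  set Q : ℝ := xs ⬝ᵥ (K⁻¹ *ᵥ xs) with hQ
  set Dq : ℝ := d ⬝ᵥ (K⁻¹ *ᵥ d) with hDq
  have E0 : ∑ i : Fin N, ((∑ j : Fin N, c j * K (w i) (w j)) - y i) ^ 2 = A := by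
    rw [hA]; exact Finset.sum_congr rfl fun i _ => by rw [hres i]
  have E1 : ∑ i : Fin N, (x (w i) - y i) ^ 2 = A + T - 2 * (γ * N) * S := by
    have : ∀ i : Fin N, (x (w i) - y i) ^ 2
        = (-(γ * N * c i)) ^ 2 + d (w i) ^ 2 - 2 * (γ * N) * (c i * d (w i)) := by
      intro i
      have h1 : x (w i) = xs (w i) + d (w i) := by rw [hxd]; rfl
      have h2 : xs (w i) - y i = -(γ * N * c i) := hres i
      have h3 : xs (w i) = y i - γ * N * c i := by linarith
      rw [h1, h3]; ring
    rw [Finset.sum_congr rfl fun i _ => this i]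
    simp only [Finset.sum_sub_distrib, Finset.sum_add_distrib, ← Finset.mul_sum, hS, hA, hT]
  have E2 : x ⬝ᵥ (K⁻¹ *ᵥ x) = Q + 2 * S + Dq := by
    rw [hxd, add_dotProduct, Matrix.mulVec_add, dotProduct_add,
      dotProduct_add]
    have h1 : xs ⬝ᵥ (K⁻¹ *ᵥ d) = S := by rw [hsym, hGxs, hda]
    have h2 : d ⬝ᵥ (K⁻¹ *ᵥ xs) = S := by rw [hGxs, hda]
    rw [h1, h2, hQ, hDq]; ring
  have hDqpos : 0 < Dq := by
    have := hK.inv.dotProduct_mulVec_pos hdne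
    simpa [hDq, dotProduct] using this
  have hTpos : 0 ≤ T := Finset.sum_nonneg fun i _ => sq_nonneg _
  rw [E0, E1, E2]
  have expand : (1 / (N : ℝ)) * (A + T - 2 * (γ * N) * S)
      = (1 / (N : ℝ)) * A + (1 / (N : ℝ)) * T - 2 * γ * S := by
    field_simp
  rw [expand]
  have h3 : γ * (Q + 2 * S + Dq) = γ * Q + 2 * γ * S + γ * Dq := by ring
  rw [h3]
  have h4 : 0 ≤ (1 / (N : ℝ)) * T := by positivity
  have h5 : 0 < γ * Dq := mul_pos hγ hDqpos
  linarith
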